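/- Over the two-letter alphabet {1,2}, the word 1^{k+1} 2^{k+1} 1^{k+1} (of length 3k+3) contains no factor XY with |X| = |Y| ≥ k+1 and Hamming distance d(X,Y) ≤ k. -/
import Mathlib


/-- The prohibition set `S_3^{n,k}`: all words `X ++ Y` with `|X| = |Y| ≥ k+1`
and Hamming distance `d(X,Y) ≤ k`. -/
def Proh (n k : ℕ) : Set (List (Fin n)) :=
  {w | ∃ X Y : List (Fin n), w = X ++ Y ∧ X.length = Y.length ∧ k + 1 ≤ X.length ∧
        ((X.zip Y).countP fun p => p.1 != p.2) ≤ k}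

private lemma countP_eq_sum {α : Type*} [Inhabited α] (p : α → Bool) (l : List α) :
    l.countP p = ∑ i ∈ Finset.range l.length, if p (l.getD i default) then 1 else 0 := by
  induction l with
  | nil => simp
  | cons a t ih =>
    rw [List.countP_cons, List.length_cons, Finset.sum_range_succ']
    simp [ih]

/-- Over the two-letter alphabet, the word `1^{k+1} 2^{k+1} 1^{k+1}` (with the
letters `1`, `2` represented by `0`, `1 : Fin 2`) contains no factor
`X ++ Y` with `|X| = |Y| ≥ k+1` and `d(X,Y) ≤ k`. -/
theorem block_word_free (k : ℕ) :
    ∀ v ∈ Proh 2 k,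
      ¬ v <:+: (List.replicate (k + 1) (0 : Fin 2) ++ List.replicate (k + 1) 1 ++
        List.replicate (k + 1) 0) := by
  rintro v ⟨X, Y, rfl, hlen, hk, hd⟩ ⟨pre, suf, hw⟩
  set m := k + 1 with hm
  set W : List (Fin 2) := List.replicate m (0 : Fin 2) ++ List.replicate m 1 ++
      List.replicate m 0 with hWdef
  set L := X.length with hL
  set s := pre.length with hs
  clear_value L s
  have hWlen : W.length = 3 * m := by simp [hWdef]; ring
  have hlenW : s + (L + L) + suf.length = 3 * m := by
    have := congrArg List.length hw
    simp [hL, ← hlen] at this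
    omega
  -- the letter at position j of W
  have hWget : ∀ j (hj : j < 3 * m), W[j]'(by omega) =
      (if m ≤ j ∧ j < 2 * m then 1 else 0 : Fin 2) := by
    intro j hj
    rw [List.getElem_of_eq hWdef (by omega)]
    rcases lt_or_ge j m with h1 | h1
    · rw [List.getElem_append_left (by simp; omega),
        List.getElem_append_left (by simpa using h1), List.getElem_replicate,
        if_neg (by omega)]
    rcases lt_or_ge j (2 * m) with h2 | h2
    · rw [List.getElem_append_left (by simp; omega),
        List.getElem_append_right (by simpa using h1), List.getElem_replicate,
        if_pos ⟨h1, h2⟩]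
    · rw [List.getElem_append_right (by simp [hWdef] at hj ⊢; omega), List.getElem_replicate,
        if_neg (by omega)]
  -- entries of X and Y in terms of W
  have hXY : ∀ j (hj : j < L + L), W[s + j]'(by omega) = (X ++ Y)[j]'(by simp [← hL, ← hlen]; omega) := by
    intro j hj
    have hji : s + j < W.length := by omega
    rw [List.getElem_of_eq hw.symm hji,
      List.getElem_append_left (by simp [← hs, ← hL, ← hlen]; omega),
      List.getElem_append_right (by omega)]
    congr 1
    omega
  have hXg : ∀ i (hi : i < L), X[i]'(by omega) =
      (if m ≤ s + i ∧ s + i < 2 * m then 1 else 0 : Fin 2) := by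
    intro i hi
    rw [← hWget (s + i) (by omega), hXY i (by omega),
      List.getElem_append_left (by omega)]
  have hYg : ∀ i (hi : i < L), Y[i]'(by omega) =
      (if m ≤ s + L + i ∧ s + L + i < 2 * m then 1 else 0 : Fin 2) := by
    intro i hi
    rw [show s + L + i = s + (L + i) from by omega]
    rw [← hWget (s + (L + i)) (by omega), hXY (L + i) (by omega),
      List.getElem_append_right (by omega)]
    congr 1
    omega
  -- rewrite the Hamming distance as a sum
  have hzlen : (X.zip Y).length = L := by rw [List.length_zip, ← hL, ← hlen, Nat.min_self]
  rw [countP_eq_sum, hzlen] at hd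
  -- the mismatch set
  have key : ∀ i ∈ Finset.range (2 * m - L - s) ∪ Finset.Ico (m - s) L,
      (if ((X.zip Y).getD i default).1 != ((X.zip Y).getD i default).2 then 1 else 0) = 1 := by
    intro i hi
    have hiL : i < L := by
      rcases Finset.mem_union.1 hi with h | h
      · have := Finset.mem_range.1 h; omega
      · exact (Finset.mem_Ico.1 h).2
    have hzi : i < (X.zip Y).length := by omega
    rw [List.getD_eq_getElem _ _ hzi, List.getElem_zip]
    have hXi := hXg i hiL
    have hYi := hYg i hiL
    rcases Finset.mem_union.1 hi with h | h
    · have := Finset.mem_range.1 h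
      rw [if_neg (by omega)] at hXi
      rw [if_pos (by omega)] at hYi
      simp [hXi, hYi]
    · have := Finset.mem_Ico.1 h
      rw [if_pos (by omega)] at hXi
      rw [if_neg (by omega)] at hYi
      simp [hXi, hYi]
  have hsub : Finset.range (2 * m - L - s) ∪ Finset.Ico (m - s) L ⊆ Finset.range L := by
    intro i hi
    rcases Finset.mem_union.1 hi with h | h
    · exact Finset.mem_range.2 (by have := Finset.mem_range.1 h; omega)
    · exact Finset.mem_range.2 (Finset.mem_Ico.1 h).2
  have hdisj : Disjoint (Finset.range (2 * m - L - s)) (Finset.Ico (m - s) L) := by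
    rw [Finset.disjoint_left]
    intro i h1 h2
    have := Finset.mem_range.1 h1
    have := (Finset.mem_Ico.1 h2).1
    omega
  have hcard : (Finset.range (2 * m - L - s) ∪ Finset.Ico (m - s) L).card =
      (2 * m - L - s) + (L - (m - s)) := by
    rw [Finset.card_union_of_disjoint hdisj, Finset.card_range, Nat.card_Ico]
  have hge : (Finset.range (2 * m - L - s) ∪ Finset.Ico (m - s) L).card ≤
      ∑ i ∈ Finset.range L,
        (if ((X.zip Y).getD i default).1 != ((X.zip Y).getD i default).2 then 1 else 0) := by
    calc _ = ∑ i ∈ Finset.range (2 * m - L - s) ∪ Finset.Ico (m - s) L,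
          (if ((X.zip Y).getD i default).1 != ((X.zip Y).getD i default).2 then 1 else 0) := by
          rw [Finset.sum_congr rfl key]; simp
      _ ≤ _ := Finset.sum_le_sum_of_subset hsub
  rw [hcard] at hge
  omega
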